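/- The map sending a nondecreasing m-parking function (a_1,...,a_n) to the word obtained by repeating each letter m times is a bijection from nondecreasing m-parking functions of length n onto ordinary nondecreasing parking functions of length mn whose evaluation is a multiple of m (each value appears a number of times divisible by m). -/

import Mathlib

namespace Stmt17

def F (m : ℕ) (w : List ℕ) : List ℕ := w.flatMap fun a => List.replicate m a

lemma F_cons (m a : ℕ) (t : List ℕ) : F m (a :: t) = List.replicate m a ++ F m t := rfl

lemma F_append (m : ℕ) (s t : List ℕ) : F m (s ++ t) = F m s ++ F m t := by
  simp [F]

lemma length_F (m : ℕ) (w : List ℕ) : (F m w).length = m * w.length := by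
  induction w with
  | nil => simp [F]
  | cons a t ih => simp only [F_cons, List.length_append, List.length_replicate, ih,
      List.length_cons]; ring

lemma count_F (m : ℕ) (w : List ℕ) (a : ℕ) : (F m w).count a = m * w.count a := by
  induction w with
  | nil => simp [F]
  | cons b t ih =>
    simp only [F_cons, List.count_append, ih, List.count_replicate, List.count_cons]
    by_cases h : b = a <;> simp [h] <;> ring

lemma mem_F (m : ℕ) (hm : 1 ≤ m) (w : List ℕ) (a : ℕ) : a ∈ F m w ↔ a ∈ w := by
  simp only [F, List.mem_flatMap, List.mem_replicate]
  constructor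
  · rintro ⟨b, hb, -, rfl⟩; exact hb
  · exact fun h => ⟨a, h, by omega, rfl⟩

lemma sorted_F (m : ℕ) {w : List ℕ} (hw : w.Pairwise (· ≤ ·)) : (F m w).Pairwise (· ≤ ·) := by
  induction w with
  | nil => simp [F]
  | cons a t ih =>
    rw [F_cons]
    have ht := List.pairwise_cons.mp hw
    refine (List.pairwise_append).mpr ⟨?_, ih ht.2, ?_⟩
    · exact List.pairwise_replicate.mpr (Or.inr le_rfl)
    · intro x hx y hy
      rw [List.mem_replicate] at hx
      obtain ⟨b, hb, hyb⟩ := List.mem_flatMap.mp hy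
      rw [List.mem_replicate] at hyb
      exact hx.2 ▸ hyb.2 ▸ ht.1 b hb

lemma getElem_congr_idx {l : List ℕ} {i j : ℕ} (h : i = j) (hi : i < l.length) :
    l[i]'hi = l[j]'(h ▸ hi) := by subst h; rfl

lemma getElem_F (m : ℕ) (w : List ℕ) (i r : ℕ) (hi : i < w.length) (hr : r < m)
    (hj : m * i + r < (F m w).length) :
    (F m w)[m * i + r]'hj = w[i] := by
  induction w generalizing i with
  | nil => simp at hi
  | cons b t ih =>
    simp only [F_cons]
    cases i with
    | zero =>
      have h1 : m * 0 + r < (List.replicate m b).length := by simp; omega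
      rw [List.getElem_append_left h1, List.getElem_replicate]
      simp
    | succ i' =>
      have h1 : (List.replicate m b).length ≤ m * (i' + 1) + r := by simp; nlinarith
      rw [List.getElem_append_right h1]
      have h2 : m * (i' + 1) + r - (List.replicate m b).length = m * i' + r := by
        simp; ring_nf; omega
      rw [getElem_congr_idx h2]
      have hi' : i' < t.length := by simpa using hi
      rw [ih i' hi']
      simp

lemma F_replicate (m q a : ℕ) : F m (List.replicate q a) = List.replicate (m * q) a := by
  induction q with
  | zero => simp [F]
  | succ q ih =>
    rw [List.replicate_succ, F_cons, ih, ← List.replicate_add]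
    congr 1
    ring

lemma F_injective (m : ℕ) (hm : 1 ≤ m) : Function.Injective (F m) := by
  intro s t h
  induction s generalizing t with
  | nil =>
    cases t with
    | nil => rfl
    | cons b t' =>
      exfalso
      have := congrArg List.length h
      simp [length_F] at this
      omega
  | cons a s' ih =>
    cases t with
    | nil =>
      exfalso
      have := congrArg List.length h
      simp [length_F] at this
      omega
    | cons b t' =>
      obtain ⟨m', rfl⟩ : ∃ m', m = m' + 1 := ⟨m - 1, by omega⟩
      have hhead : a = b := by
        have := congrArg List.head? h
        simpa [F_cons, List.replicate_succ] using this
      subst hhead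
      have hdrop : ∀ l : List ℕ, List.drop (m' + 1) (List.replicate (m' + 1) a ++ l) = l := by
        intro l
        have := List.drop_left (l₁ := List.replicate (m' + 1) a) (l₂ := l)
        simpa using this
      have htail : F (m' + 1) s' = F (m' + 1) t' := by
        have := congrArg (List.drop (m' + 1)) h
        rwa [F_cons, F_cons, hdrop, hdrop] at this
      rw [ih htail]

lemma sorted_decomp (a : ℕ) :
    ∀ v' : List ℕ, (a :: v').Pairwise (· ≤ ·) →
      ∃ q d, a :: v' = List.replicate q a ++ d ∧ 1 ≤ q ∧ a ∉ d ∧ d.Sublist (a :: v') := by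
  intro v'
  induction v' with
  | nil => exact fun _ => ⟨1, [], by simp, le_rfl, by simp, by simp⟩
  | cons c v'' ih =>
    intro hs
    have hs' : (c :: v'').Pairwise (· ≤ ·) := (List.pairwise_cons.mp hs).2
    have hac : a ≤ c := (List.pairwise_cons.mp hs).1 c (by simp)
    by_cases hca : c = a
    · subst hca
      obtain ⟨q, d, hqd, hq, had, hsub⟩ := ih hs'
      refine ⟨q + 1, d, ?_, by omega, had, ?_⟩
      · rw [List.replicate_succ, List.cons_append, ← hqd]
      · exact hsub.trans ((List.sublist_cons_self c (c :: v'')))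
    · refine ⟨1, c :: v'', by simp, le_rfl, ?_, List.sublist_cons_self a (c :: v'')⟩
      intro hmem
      have hlt : a < c := lt_of_le_of_ne hac (Ne.symm hca)
      rcases List.mem_cons.mp hmem with h | h
      · exact hca h.symm
      · have := List.rel_of_pairwise_cons hs' h
        omega

lemma exists_preimage (m : ℕ) (hm : 1 ≤ m) (k : ℕ) :
    ∀ v : List ℕ, v.length = k → v.Pairwise (· ≤ ·) → (∀ a ∈ v, m ∣ v.count a) →
      ∃ w : List ℕ, w.Pairwise (· ≤ ·) ∧ (∀ a ∈ w, a ∈ v) ∧ F m w = v := by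
  induction k using Nat.strong_induction_on with
  | _ k ih =>
    intro v hlen hs hc
    match v with
    | [] => exact ⟨[], by simp [F]⟩
    | a :: v' =>
      obtain ⟨q, d, hqd, hq, had, hsub⟩ := sorted_decomp a v' hs
      have hdsorted := hs.sublist hsub
      have hdmem : ∀ b ∈ d, b ∈ a :: v' := fun b hb => hsub.mem hb
      have hcount_a : (a :: v').count a = q := by
        rw [hqd, List.count_append, List.count_replicate, List.count_eq_zero.mpr had]
        simp
      have hmq : m ∣ q := hcount_a ▸ hc a (by simp)
      have hdlen : d.length < k := by
        have := congrArg List.length hqd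
        simp at this
        have hlen' : v'.length + 1 = k := by simpa using hlen
        omega
      have hdcount : ∀ b ∈ d, m ∣ d.count b := by
        intro b hb
        have hba : b ≠ a := fun h => had (h ▸ hb)
        have heq : (a :: v').count b = d.count b := by
          rw [hqd, List.count_append, List.count_replicate]
          simp [Ne.symm hba]
        exact heq ▸ hc b (hdmem b hb)
      obtain ⟨w', hw's, hw'mem, hw'F⟩ := ih d.length hdlen d rfl hdsorted hdcount
      refine ⟨List.replicate (q / m) a ++ w', ?_, ?_, ?_⟩
      · refine List.pairwise_append.mpr ⟨List.pairwise_replicate.mpr (Or.inr le_rfl), hw's, ?_⟩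
        intro x hx y hy
        rw [List.mem_replicate] at hx
        have hy' : y ∈ a :: v' := hdmem y (hw'mem y hy)
        rcases List.mem_cons.mp hy' with h | h
        · omega
        · exact hx.2 ▸ List.rel_of_pairwise_cons hs h
      · intro b hb
        rcases List.mem_append.mp hb with h | h
        · rw [List.mem_replicate] at h
          simp [h.2]
        · exact hdmem b (hw'mem b h)
      · rw [F_append, F_replicate, hw'F, Nat.mul_div_cancel' hmq, hqd]

end Stmt17

/-- Repeating each letter `m` times is a bijection from nondecreasing
`m`-parking functions of length `n` onto ordinary nondecreasing parking functions of
length `mn` whose evaluation is a multiple of `m` (each value occurs a number of times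
divisible by `m`). -/
theorem repeat_bijOn_nondecreasing_mParking (m n : ℕ) (hm : 1 ≤ m) :
    Set.BijOn (fun w : List ℕ => w.flatMap fun a => List.replicate m a)
      {w : List ℕ |
        w.length = n ∧ w.Pairwise (· ≤ ·) ∧ (∀ a ∈ w, 1 ≤ a) ∧
        ∀ i (h : i < w.length), w.get ⟨i, h⟩ ≤ m * i + 1}
      {v : List ℕ |
        v.length = m * n ∧ v.Pairwise (· ≤ ·) ∧ (∀ a ∈ v, 1 ≤ a) ∧
        (∀ i (h : i < v.length), v.get ⟨i, h⟩ ≤ i + 1) ∧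
        ∀ a ∈ v, m ∣ v.count a} := by
  have hF : (fun w : List ℕ => w.flatMap fun a => List.replicate m a) = Stmt17.F m := rfl
  rw [hF]
  refine ⟨?_, ?_, ?_⟩
  · -- MapsTo
    rintro w ⟨hlen, hsort, hpos, hbound⟩
    refine ⟨by rw [Stmt17.length_F, hlen], Stmt17.sorted_F m hsort, ?_, ?_, ?_⟩
    · intro a ha
      exact hpos a ((Stmt17.mem_F m hm w a).mp ha)
    · intro j hj
      have hj' : j < m * w.length := by rwa [Stmt17.length_F] at hj
      have hi : j / m < w.length := (Nat.div_lt_iff_lt_mul (by omega)).mpr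
        (by rw [Nat.mul_comm]; exact hj')
      have hr : j % m < m := Nat.mod_lt _ (by omega)
      have hmul : m * (j / m) + j % m = j := Nat.div_add_mod j m
      have hb : w[j / m]'hi ≤ m * (j / m) + 1 := hbound (j / m) hi
      show (Stmt17.F m w)[j]'hj ≤ j + 1
      rw [Stmt17.getElem_congr_idx hmul.symm, Stmt17.getElem_F m w (j / m) (j % m) hi hr]
      omega
    · intro a ha
      rw [Stmt17.count_F]
      exact ⟨_, rfl⟩
  · -- InjOn
    exact fun x _ y _ h => Stmt17.F_injective m hm h
  · -- SurjOn
    rintro v ⟨hlen, hsort, hpos, hbound, hcount⟩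
    obtain ⟨w, hws, hwmem, hwF⟩ := Stmt17.exists_preimage m hm v.length v rfl hsort hcount
    have hwlen : w.length = n := by
      have : m * w.length = m * n := by rw [← Stmt17.length_F, hwF, hlen]
      exact Nat.eq_of_mul_eq_mul_left (by omega) this
    refine ⟨w, ⟨hwlen, hws, fun a ha => hpos a (hwmem a ha), ?_⟩, hwF⟩
    intro i hi
    have hmi : m * i + 0 < (Stmt17.F m w).length := by
      rw [Stmt17.length_F]
      have : i + 1 ≤ w.length := hi
      nlinarith
    have h1 : (Stmt17.F m w)[m * i + 0]'hmi = w[i]'hi :=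
      Stmt17.getElem_F m w i 0 hi (by omega) hmi
    have hmi' : m * i < v.length := by rw [← hwF]; simpa using hmi
    have h2 : (Stmt17.F m w)[m * i + 0]'hmi = v[m * i]'hmi' := by
      simp only [hwF]
      exact Stmt17.getElem_congr_idx (by omega) _
    have hb : v[m * i]'hmi' ≤ m * i + 1 := hbound (m * i) hmi'
    show w[i]'hi ≤ m * i + 1
    rw [← h1, h2]
    exact hb
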